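/- Let y_1, ..., y_m : U → R_{>0} be functions on a set U, Y(s) = diag(y_1(s), ..., y_m(s)), and let A : U → Mat_{m×m}(R) be bounded. Let M be an h × m real matrix of full rank h whose maximal minors are in {-1, 0, 1}, with at least one nonzero. Then there exist constants c_1, c_2, C > 0 such that c_1 det(M Y(s) M^T) < det(M (Y(s) + A(s)) M^T) < c_2 det(M Y(s) M^T) for all s ∈ U with y_1(s), ..., y_m(s) ≥ C. -/

import Mathlib

open Matrix

set_option maxHeartbeats 1000000

lemma aux_prod {ι : Type*} [DecidableEq ι] {ε : ℝ} (hε0 : 0 ≤ ε) (hε1 : ε ≤ 1)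
    (s : Finset ι) (x : ι → ℝ) (hx : ∀ i ∈ s, |x i| ≤ ε) :
    |(∏ i ∈ s, (1 + x i)) - 1| ≤ ε * s.card * 2 ^ s.card := by
  induction s using Finset.induction with
  | empty => simp
  | @insert a t ha ih =>
    rw [Finset.prod_insert ha, Finset.card_insert_of_notMem ha]
    have hxa : |x a| ≤ ε := hx a (Finset.mem_insert_self a t)
    have iht : |(∏ i ∈ t, (1 + x i)) - 1| ≤ ε * t.card * 2 ^ t.card :=
      ih (fun i hi => hx i (Finset.mem_insert_of_mem hi))
    set P := ∏ i ∈ t, (1 + x i)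
    have h1 : (1 + x a) * P - 1 = (1 + x a) * (P - 1) + x a := by ring
    have h2 : |(1 + x a) * P - 1| ≤ |1 + x a| * |P - 1| + |x a| := by
      rw [h1]; exact (abs_add_le _ _).trans (by rw [abs_mul])
    have h3 : |1 + x a| ≤ 2 := by
      have := abs_le.mp hxa
      calc |1 + x a| ≤ |(1:ℝ)| + |x a| := abs_add_le _ _
        _ ≤ 1 + 1 := by rw [abs_one]; linarith
        _ = 2 := by norm_num
    have hP1 : (0:ℝ) ≤ |P - 1| := abs_nonneg _
    have h4 : |1 + x a| * |P - 1| ≤ 2 * (ε * t.card * 2 ^ t.card) :=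
      mul_le_mul h3 iht hP1 (by norm_num)
    have hc : (0:ℝ) ≤ (t.card : ℝ) := Nat.cast_nonneg _
    calc |(1 + x a) * P - 1| ≤ 2 * (ε * t.card * 2 ^ t.card) + ε := by linarith
      _ ≤ ε * (t.card + 1) * 2 ^ (t.card + 1) := by
          rw [pow_succ]
          have h5 : (1:ℝ) ≤ 2 ^ t.card := one_le_pow₀ (by norm_num)
          have h6 : ε * 1 ≤ ε * (2 ^ t.card * 2) := by
            apply mul_le_mul_of_nonneg_left _ hε0
            linarith
          nlinarith
      _ = ε * (↑(t.card + 1)) * 2 ^ (t.card + 1) := by push_cast; ring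

lemma aux_det {n : ℕ} {ε : ℝ} (hε0 : 0 ≤ ε) (hε1 : ε ≤ 1)
    (X : Matrix (Fin n) (Fin n) ℝ) (hX : ∀ i j, |X i j| ≤ ε) :
    |(1 + X).det - 1| ≤ ε * ((n : ℝ) + n.factorial) * 2 ^ n := by
  classical
  rw [Matrix.det_apply]
  rw [← Finset.add_sum_erase _ _ (Finset.mem_univ (1 : Equiv.Perm (Fin n)))]
  have hid : (Equiv.Perm.sign (1 : Equiv.Perm (Fin n))) • ∏ i, (1 + X) ((1 : Equiv.Perm (Fin n)) i) i
      = ∏ i : Fin n, (1 + X i i) := by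
    simp [Matrix.add_apply, Matrix.one_apply_eq]
  rw [hid]
  set S := ∑ σ ∈ Finset.univ.erase (1 : Equiv.Perm (Fin n)),
      (Equiv.Perm.sign σ) • ∏ i, (1 + X) (σ i) i with hS
  set P := ∏ i : Fin n, (1 + X i i) with hP
  have hmain : |P - 1| ≤ ε * n * 2 ^ n := by
    simpa using aux_prod hε0 hε1 Finset.univ (fun i => X i i) (fun i _ => hX i i)
  have hterm : ∀ σ ∈ (Finset.univ.erase (1 : Equiv.Perm (Fin n))),
      |(Equiv.Perm.sign σ) • ∏ i, (1 + X) (σ i) i| ≤ ε * 2 ^ n := by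
    intro σ hσ
    have hσ1 : σ ≠ 1 := (Finset.mem_erase.mp hσ).1
    obtain ⟨i0, hi0⟩ : ∃ i, σ i ≠ i := by
      by_contra hcon; push_neg at hcon
      exact hσ1 (Equiv.ext fun i => hcon i)
    have habs : |(Equiv.Perm.sign σ) • ∏ i, (1 + X) (σ i) i| = ∏ i, |(1 + X) (σ i) i| := by
      rw [← Finset.abs_prod]
      rcases Int.units_eq_one_or (Equiv.Perm.sign σ) with h | h <;> simp [h]
    rw [habs, ← Finset.mul_prod_erase _ _ (Finset.mem_univ i0)]
    have h1 : |(1 + X) (σ i0) i0| ≤ ε := by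
      rw [Matrix.add_apply, Matrix.one_apply_ne hi0, zero_add]; exact hX _ _
    have h2 : ∏ i ∈ Finset.univ.erase i0, |(1 + X) (σ i) i| ≤ 2 ^ n := by
      calc ∏ i ∈ Finset.univ.erase i0, |(1 + X) (σ i) i|
          ≤ ∏ _i ∈ Finset.univ.erase i0, (2:ℝ) := by
            apply Finset.prod_le_prod (fun _ _ => abs_nonneg _)
            intro i _
            have hone : |(1 : Matrix (Fin n) (Fin n) ℝ) (σ i) i| ≤ 1 := by
              simp only [Matrix.one_apply]
              split <;> norm_num
            calc |(1 + X) (σ i) i| ≤ |(1 : Matrix (Fin n) (Fin n) ℝ) (σ i) i| + |X (σ i) i| := by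
                  rw [Matrix.add_apply]; exact abs_add_le _ _
              _ ≤ 1 + 1 := add_le_add hone ((hX _ _).trans hε1)
              _ = 2 := by norm_num
        _ = 2 ^ (Finset.univ.erase i0).card := (Finset.prod_const _)
        _ ≤ 2 ^ n := by
            apply pow_le_pow_right₀ (by norm_num)
            calc (Finset.univ.erase i0).card ≤ (Finset.univ : Finset (Fin n)).card :=
                Finset.card_erase_le
              _ = n := by simp
    exact mul_le_mul h1 h2 (Finset.prod_nonneg fun _ _ => abs_nonneg _) hε0
  have hsum : |S| ≤ (n.factorial : ℝ) * (ε * 2 ^ n) := by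
    rw [hS]
    calc |∑ σ ∈ Finset.univ.erase (1 : Equiv.Perm (Fin n)),
        (Equiv.Perm.sign σ) • ∏ i, (1 + X) (σ i) i|
        ≤ ∑ σ ∈ Finset.univ.erase (1 : Equiv.Perm (Fin n)),
          |(Equiv.Perm.sign σ) • ∏ i, (1 + X) (σ i) i| := Finset.abs_sum_le_sum_abs _ _
      _ ≤ ∑ _σ ∈ Finset.univ.erase (1 : Equiv.Perm (Fin n)), ε * 2 ^ n :=
          Finset.sum_le_sum hterm
      _ = (Finset.univ.erase (1 : Equiv.Perm (Fin n))).card * (ε * 2 ^ n) := by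
          rw [Finset.sum_const, nsmul_eq_mul]
      _ ≤ (n.factorial : ℝ) * (ε * 2 ^ n) := by
          apply mul_le_mul_of_nonneg_right _ (by positivity)
          have h1 : (Finset.univ.erase (1 : Equiv.Perm (Fin n))).card ≤
              (Finset.univ : Finset (Equiv.Perm (Fin n))).card := Finset.card_erase_le
          have h2 : (Finset.univ : Finset (Equiv.Perm (Fin n))).card = n.factorial := by
            rw [Finset.card_univ, Fintype.card_perm, Fintype.card_fin]
          exact_mod_cast h2 ▸ h1
  have key : P + S - 1 = (P - 1) + S := by ring
  rw [key]
  calc |(P - 1) + S| ≤ |P - 1| + |S| := abs_add_le _ _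
    _ ≤ ε * n * 2 ^ n + (n.factorial : ℝ) * (ε * 2 ^ n) := add_le_add hmain hsum
    _ = ε * ((n : ℝ) + n.factorial) * 2 ^ n := by ring


/-- For positive functions `y_i : U → ℝ`, a bounded matrix-valued
map `A : U → Mat_{m×m}(ℝ)`, and an `h × m` real matrix `M` of full rank `h`
whose maximal minors lie in `{-1, 0, 1}` with at least one nonzero, there are
constants `c₁, c₂, C > 0` with
`c₁ det(M Y Mᵀ) < det(M (Y + A) Mᵀ) < c₂ det(M Y Mᵀ)` whenever all `y_i ≥ C`. -/
theorem stmt_12 {U : Type*} {m h : ℕ}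
    (y : Fin m → U → ℝ) (hy : ∀ i s, 0 < y i s)
    (A : U → Matrix (Fin m) (Fin m) ℝ) (hA : ∃ K : ℝ, ∀ s i j, |A s i j| ≤ K)
    (M : Matrix (Fin h) (Fin m) ℝ) (hrank : M.rank = h)
    (hminor : ∀ g : Fin h → Fin m, (M.submatrix id g).det ∈ ({-1, 0, 1} : Set ℝ))
    (hnz : ∃ g : Fin h → Fin m, (M.submatrix id g).det ≠ 0) :
    ∃ c₁ c₂ C : ℝ, 0 < c₁ ∧ 0 < c₂ ∧ 0 < C ∧ ∀ s : U, (∀ i, C ≤ y i s) →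
      c₁ * (M * Matrix.diagonal (fun i => y i s) * Mᵀ).det <
          (M * (Matrix.diagonal (fun i => y i s) + A s) * Mᵀ).det ∧
        (M * (Matrix.diagonal (fun i => y i s) + A s) * Mᵀ).det <
          c₂ * (M * Matrix.diagonal (fun i => y i s) * Mᵀ).det := by
  classical
  obtain ⟨K, hK⟩ := hA
  set K' : ℝ := max K 1 with hK'def
  have hK'1 : (1:ℝ) ≤ K' := le_max_right _ _
  have hK'0 : (0:ℝ) < K' := lt_of_lt_of_le one_pos hK'1
  have hKb : ∀ s i j, |A s i j| ≤ K' := fun s i j => (hK s i j).trans (le_max_left _ _)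
  set cn : ℝ := ((m:ℝ) + m.factorial) * 2 ^ m with hcn
  have hcn1 : (1:ℝ) ≤ cn := by
    have h1 : (1:ℝ) ≤ (m:ℝ) + m.factorial := by
      have h2 := m.factorial_pos
      have h3 : (1:ℝ) ≤ (m.factorial : ℝ) := by exact_mod_cast h2
      have h4 : (0:ℝ) ≤ (m:ℝ) := Nat.cast_nonneg _
      linarith
    have h2 : (1:ℝ) ≤ (2:ℝ) ^ m := one_le_pow₀ (by norm_num)
    nlinarith
  set Cv : ℝ := 1 + 4 * m * K' * cn with hCv
  have hm0 : (0:ℝ) ≤ (m:ℝ) := Nat.cast_nonneg _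
  have hCv1 : (1:ℝ) ≤ Cv := by
    have : (0:ℝ) ≤ 4 * m * K' * cn := by positivity
    linarith
  have hCv0 : (0:ℝ) < Cv := lt_of_lt_of_le one_pos hCv1
  refine ⟨1/2, 2, Cv, by norm_num, by norm_num, hCv0, ?_⟩
  intro s hs
  -- setup
  set yv : Fin m → ℝ := fun i => y i s with hyv
  have hy1 : ∀ i, (1:ℝ) ≤ yv i := fun i => hCv1.trans (hs i)
  have hy0 : ∀ i, (0:ℝ) < yv i := fun i => lt_of_lt_of_le one_pos (hy1 i)
  have hsq : ∀ i, (0:ℝ) < Real.sqrt (yv i) := fun i => Real.sqrt_pos.mpr (hy0 i)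
  set D : Matrix (Fin m) (Fin m) ℝ := Matrix.diagonal (fun i => Real.sqrt (yv i)) with hD
  set Di : Matrix (Fin m) (Fin m) ℝ := Matrix.diagonal (fun i => (Real.sqrt (yv i))⁻¹) with hDi
  set B : Matrix (Fin h) (Fin m) ℝ := M * D with hB
  set G : Matrix (Fin h) (Fin h) ℝ := M * Matrix.diagonal yv * Mᵀ with hG
  have hDt : Dᵀ = D := Matrix.diagonal_transpose _
  have hDD : D * D = Matrix.diagonal yv := by
    rw [hD, Matrix.diagonal_mul_diagonal]
    exact congrArg Matrix.diagonal (funext fun i => Real.mul_self_sqrt (hy0 i).le)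
  have hDDi : D * Di = 1 := by
    rw [hD, hDi, Matrix.diagonal_mul_diagonal]
    have : (fun i => Real.sqrt (yv i) * (Real.sqrt (yv i))⁻¹) = fun _ => (1:ℝ) := by
      funext i; exact mul_inv_cancel₀ (hsq i).ne'
    rw [this, Matrix.diagonal_one]
  have hDiD : Di * D = 1 := by
    rw [hD, hDi, Matrix.diagonal_mul_diagonal]
    have : (fun i => (Real.sqrt (yv i))⁻¹ * Real.sqrt (yv i)) = fun _ => (1:ℝ) := by
      funext i; exact inv_mul_cancel₀ (hsq i).ne'
    rw [this, Matrix.diagonal_one]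
  have hBt : Bᵀ = D * Mᵀ := by rw [hB, Matrix.transpose_mul, hDt]
  have hBBt : B * Bᵀ = G := by
    rw [hB, hBt, hG, ← hDD]
    simp only [Matrix.mul_assoc]
  -- injectivity of Mᵀ *ᵥ ·
  have hMTinj : ∀ x : Fin h → ℝ, Mᵀ *ᵥ x = 0 → x = 0 := by
    intro x hx
    have hr : Mᵀ.rank = h := by rw [Matrix.rank_transpose, hrank]
    have hrr : Module.finrank ℝ (LinearMap.range (Mᵀ.mulVecLin)) = h := hr
    have hrn := LinearMap.finrank_range_add_finrank_ker (Mᵀ.mulVecLin)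
    rw [hrr, Module.finrank_pi, Fintype.card_fin] at hrn
    have hker : Module.finrank ℝ (LinearMap.ker (Mᵀ.mulVecLin)) = 0 := by omega
    have hbot : LinearMap.ker (Mᵀ.mulVecLin) = ⊥ := Submodule.finrank_eq_zero.mp hker
    have hxmem : x ∈ LinearMap.ker (Mᵀ.mulVecLin) := by
      rw [LinearMap.mem_ker, Matrix.mulVecLin_apply]; exact hx
    rw [hbot, Submodule.mem_bot] at hxmem
    exact hxmem
  -- G is positive definite
  have hGt : Gᵀ = G := by
    rw [hG]
    simp only [Matrix.transpose_mul, Matrix.transpose_transpose, Matrix.diagonal_transpose,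
      Matrix.mul_assoc]
  have hHerm : G.IsHermitian := by
    rw [Matrix.IsHermitian]
    rw [show Gᴴ = Gᵀ from rfl]
    exact hGt
  have hPD : G.PosDef := by
    refine Matrix.PosDef.of_dotProduct_mulVec_pos hHerm fun x hx => ?_
    have hstar : star x = x := by
      funext i; simp
    rw [hstar, ← hBBt, ← Matrix.mulVec_mulVec, Matrix.dotProduct_mulVec, ← Matrix.mulVec_transpose]
    set v : Fin m → ℝ := Bᵀ *ᵥ x with hv
    have hvne : v ≠ 0 := by
      intro hv0
      apply hx
      apply hMTinj
      have hveq : ∀ i, Real.sqrt (yv i) * (Mᵀ *ᵥ x) i = 0 := by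
        intro i
        have : v i = 0 := by rw [hv0]; rfl
        rwa [hv, hBt, ← Matrix.mulVec_mulVec, Matrix.mulVec_diagonal] at this
      funext i
      have := hveq i
      have h2 := (hsq i).ne'
      simp only [Pi.zero_apply]
      rcases mul_eq_zero.mp this with h3 | h3
      · exact absurd h3 h2
      · exact h3
    obtain ⟨i0, hi0⟩ : ∃ i, v i ≠ 0 := by
      by_contra hcon; push_neg at hcon
      exact hvne (funext hcon)
    have : 0 < ∑ i, v i * v i := by
      apply Finset.sum_pos' (fun i _ => mul_self_nonneg _)
      exact ⟨i0, Finset.mem_univ i0, mul_self_pos.mpr hi0⟩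
    simpa [dotProduct] using this
  have hGdet : 0 < G.det := hPD.det_pos
  have hGunit : IsUnit G.det := isUnit_iff_ne_zero.mpr hGdet.ne'
  have hGiG : G⁻¹ * G = 1 := Matrix.nonsing_inv_mul G hGunit
  have hGGi : G * G⁻¹ = 1 := Matrix.mul_nonsing_inv G hGunit
  have hGit : (G⁻¹)ᵀ = G⁻¹ := by rw [Matrix.transpose_nonsing_inv, hGt]
  -- the projection P
  set P : Matrix (Fin m) (Fin m) ℝ := Bᵀ * G⁻¹ * B with hP
  have hcanB : ∀ Z : Matrix (Fin h) (Fin m) ℝ, B * (Bᵀ * Z) = G * Z := fun Z => by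
    rw [← Matrix.mul_assoc, hBBt]
  have hcanG : ∀ Z : Matrix (Fin h) (Fin m) ℝ, G⁻¹ * (G * Z) = Z := fun Z => by
    rw [← Matrix.mul_assoc, hGiG, Matrix.one_mul]
  have hPP : P * P = P := by
    rw [hP]
    simp only [Matrix.mul_assoc, hcanB, hcanG]
  have hPt : Pᵀ = P := by
    rw [hP]
    simp only [Matrix.transpose_mul, Matrix.transpose_transpose, hGit, Matrix.mul_assoc]
  have hPs : ∀ a b, P a b = P b a := by
    intro a b
    have h1 : Pᵀ b a = P b a := by rw [hPt]
    rwa [Matrix.transpose_apply] at h1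
  have hPdiag : ∀ a, P a a = ∑ k, (P a k)^2 := by
    intro a
    conv_lhs => rw [← hPP]
    rw [Matrix.mul_apply]
    exact Finset.sum_congr rfl fun k _ => by rw [hPs k a]; ring
  have hPd0 : ∀ a, 0 ≤ P a a := fun a =>
    (hPdiag a) ▸ Finset.sum_nonneg fun _ _ => sq_nonneg _
  have hPd1 : ∀ a, P a a ≤ 1 := by
    intro a
    have h1 : (P a a)^2 ≤ P a a := by
      conv_rhs => rw [hPdiag a]
      exact Finset.single_le_sum (f := fun k => (P a k)^2) (fun _ _ => sq_nonneg _)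
        (Finset.mem_univ a)
    nlinarith [sq_nonneg (P a a - 1)]
  have hPe : ∀ a b, |P a b| ≤ 1 := by
    intro a b
    have hab : P a b = ∑ k, P a k * P b k := by
      conv_lhs => rw [← hPP]
      rw [Matrix.mul_apply]
      exact Finset.sum_congr rfl fun k _ => by rw [hPs k b]
    have hcs : (∑ k, P a k * P b k)^2 ≤ (∑ k, (P a k)^2) * (∑ k, (P b k)^2) :=
      Finset.sum_mul_sq_le_sq_mul_sq _ _ _
    have hsq1 : (P a b)^2 ≤ 1 := by
      rw [hab]
      calc (∑ k, P a k * P b k)^2 ≤ (∑ k, (P a k)^2) * (∑ k, (P b k)^2) := hcs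
        _ = P a a * P b b := by rw [← hPdiag, ← hPdiag]
        _ ≤ 1 := by nlinarith [hPd0 a, hPd0 b, hPd1 a, hPd1 b]
    rw [abs_le]
    constructor <;> nlinarith
  -- the small matrix E and X
  set E : Matrix (Fin m) (Fin m) ℝ := Di * A s * Di with hEdef
  have hsqC : 0 < Real.sqrt Cv := Real.sqrt_pos.mpr hCv0
  have hEe : ∀ i j, |E i j| ≤ K' / Cv := by
    intro i j
    have he : E i j = (Real.sqrt (yv i))⁻¹ * A s i j * (Real.sqrt (yv j))⁻¹ := by
      rw [hEdef, hDi, Matrix.mul_diagonal, Matrix.diagonal_mul]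
    have hmono : ∀ i, (Real.sqrt (yv i))⁻¹ ≤ (Real.sqrt Cv)⁻¹ := by
      intro i
      rw [← one_div, ← one_div]
      exact one_div_le_one_div_of_le hsqC (Real.sqrt_le_sqrt (hs i))
    have habs : |E i j| = (Real.sqrt (yv i))⁻¹ * |A s i j| * (Real.sqrt (yv j))⁻¹ := by
      rw [he, abs_mul, abs_mul, abs_of_nonneg (inv_nonneg.mpr (hsq i).le),
        abs_of_nonneg (inv_nonneg.mpr (hsq j).le)]
    rw [habs]
    have hstep : (Real.sqrt (yv i))⁻¹ * |A s i j| * (Real.sqrt (yv j))⁻¹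
        ≤ (Real.sqrt Cv)⁻¹ * K' * (Real.sqrt Cv)⁻¹ := by
      have h1 : (Real.sqrt (yv i))⁻¹ * |A s i j| ≤ (Real.sqrt Cv)⁻¹ * K' :=
        mul_le_mul (hmono i) (hKb s i j) (abs_nonneg _) (inv_nonneg.mpr hsqC.le)
      have h2 : (0:ℝ) ≤ (Real.sqrt Cv)⁻¹ * K' := by positivity
      exact mul_le_mul h1 (hmono j) (inv_nonneg.mpr (hsq j).le) h2
    refine hstep.trans (le_of_eq ?_)
    have hii : (Real.sqrt Cv)⁻¹ * (Real.sqrt Cv)⁻¹ = Cv⁻¹ := by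
      rw [← mul_inv, Real.mul_self_sqrt hCv0.le]
    calc (Real.sqrt Cv)⁻¹ * K' * (Real.sqrt Cv)⁻¹
        = K' * ((Real.sqrt Cv)⁻¹ * (Real.sqrt Cv)⁻¹) := by ring
      _ = K' * Cv⁻¹ := by rw [hii]
      _ = K' / Cv := by rw [div_eq_mul_inv]
  set X : Matrix (Fin m) (Fin m) ℝ := E * P with hXdef
  have hXe : ∀ i j, |X i j| ≤ m * (K' / Cv) := by
    intro i j
    have hx : X i j = ∑ k, E i k * P k j := by rw [hXdef, Matrix.mul_apply]
    rw [hx]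
    calc |∑ k, E i k * P k j| ≤ ∑ k, |E i k * P k j| := Finset.abs_sum_le_sum_abs _ _
      _ ≤ ∑ _k : Fin m, K' / Cv * 1 := by
          apply Finset.sum_le_sum
          intro k _
          rw [abs_mul]
          exact mul_le_mul (hEe i k) (hPe k j) (abs_nonneg _) (by positivity)
      _ = m * (K' / Cv) := by rw [Finset.sum_const, Finset.card_univ, Fintype.card_fin,
          nsmul_eq_mul, mul_one]
  -- epsilon bounds
  set ε : ℝ := m * (K' / Cv) with hεdef
  have hε0 : 0 ≤ ε := by positivity
  have hε1 : ε ≤ 1 := by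
    rw [hεdef, ← mul_div_assoc, div_le_one hCv0]
    nlinarith
  have hεc : ε * cn ≤ 1/4 := by
    rw [hεdef, ← mul_div_assoc, div_mul_eq_mul_div, div_le_iff₀ hCv0]
    nlinarith
  have hdet14 : |(1 + X).det - 1| ≤ 1/4 := by
    have := aux_det hε0 hε1 X hXe
    calc |(1 + X).det - 1| ≤ ε * ((m : ℝ) + m.factorial) * 2 ^ m := this
      _ = ε * cn := by rw [hcn]; ring
      _ ≤ 1/4 := hεc
  have hdlo : (3:ℝ)/4 ≤ (1 + X).det := by
    have := (abs_le.mp hdet14).1; linarith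
  have hdhi : (1 + X).det ≤ (5:ℝ)/4 := by
    have := (abs_le.mp hdet14).2; linarith
  -- determinant factorization
  have hBEB : B * E * Bᵀ = M * A s * Mᵀ := by
    rw [hB, hBt, hEdef]
    have hc1 : ∀ Z : Matrix (Fin m) (Fin h) ℝ, D * (Di * Z) = Z := fun Z => by
      rw [← Matrix.mul_assoc, hDDi, Matrix.one_mul]
    have hc2 : ∀ Z : Matrix (Fin m) (Fin h) ℝ, Di * (D * Z) = Z := fun Z => by
      rw [← Matrix.mul_assoc, hDiD, Matrix.one_mul]
    simp only [Matrix.mul_assoc, hc1, hc2]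
  have hsplit : M * (Matrix.diagonal yv + A s) * Mᵀ = G + B * E * Bᵀ := by
    rw [Matrix.mul_add, Matrix.add_mul, hBEB, hG]
  have hfact : G + B * E * Bᵀ = G * (1 + G⁻¹ * (B * E * Bᵀ)) := by
    have h1 : G * (G⁻¹ * (B * E * Bᵀ)) = B * E * Bᵀ := by
      rw [← Matrix.mul_assoc G G⁻¹ (B * E * Bᵀ), hGGi, Matrix.one_mul]
    rw [Matrix.mul_add, Matrix.mul_one, h1]
  have hcomm : (1 + G⁻¹ * (B * E * Bᵀ)).det = (1 + X).det := by
    have h9 : G⁻¹ * (B * E * Bᵀ) = (G⁻¹ * B) * (E * Bᵀ) := by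
      simp only [Matrix.mul_assoc]
    have h10 : (E * Bᵀ) * (G⁻¹ * B) = X := by
      rw [hXdef, hP]
      simp only [Matrix.mul_assoc]
    rw [h9, Matrix.det_one_add_mul_comm, h10]
  have hdeteq : (M * (Matrix.diagonal yv + A s) * Mᵀ).det = G.det * (1 + X).det := by
    rw [hsplit, hfact, Matrix.det_mul, hcomm]
  rw [hdeteq]
  constructor
  · nlinarith [mul_le_mul_of_nonneg_left hdlo hGdet.le]
  · nlinarith [mul_le_mul_of_nonneg_left hdhi hGdet.le]
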